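/- arXiv:1603.05748 — 8 statements merged into one kernel-verified Lean document; each statement's English description precedes it below -/
import Mathlib

section
/- Let B(j,q) = (q/j)·C(2j, j−q) denote the Catalan triangle numbers and for integers j ≥ 1 and k ≥ j set c(j,k) = (j!/(2j−1)!)·∑_{q=1}^{j} (−1)^{q+j} B(j,q) q^{2k−1}, extended by c(0,k) = 0 for all k ≥ 1. Then c(1,1) = 1 and the recurrence c(j, k+1) = j²·c(j,k) + j·c(j−1,k) holds for all j ≥ 1 and k ≥ j. -/
/-- The Catalan triangle numbers `B(j,q) = (q/j) * C(2j, j-q)`. -/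
noncomputable def catalanTriangle (j q : ℕ) : ℚ :=
  ((q : ℚ) / (j : ℚ)) * (Nat.choose (2 * j) (j - q) : ℚ)

/-- The coefficients `c(j,k) = (j!/(2j-1)!) * ∑_{q=1}^{j} (-1)^(q+j) B(j,q) q^(2k-1)`.
For `j = 0` the sum is empty, so `c(0,k) = 0`. -/
noncomputable def tuenterCoeff (j k : ℕ) : ℚ :=
  ((Nat.factorial j : ℚ) / (Nat.factorial (2 * j - 1) : ℚ)) *
    ∑ q ∈ Finset.Icc 1 j, (-1 : ℚ) ^ (q + j) * catalanTriangle j q * (q : ℚ) ^ (2 * k - 1)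

-- key binomial identity, cast to ℚ
lemma hkeyQ (a b : ℕ) :
    (Nat.choose (2*a+2*b+4) (a+1) : ℚ) * (a+1) * (a+2*b+3)
      = (2*a+2*b+4) * (2*a+2*b+3) * (Nat.choose (2*a+2*b+2) a : ℚ) := by
  have h1 : (2*a+2*b+4) * Nat.choose (2*a+2*b+3) a
      = Nat.choose (2*a+2*b+4) (a+1) * (a+1) := by
    simpa using Nat.add_one_mul_choose_eq (2*a+2*b+3) a
  have h2 : Nat.choose (2*a+2*b+3) (a+1) * (a+1)
      = Nat.choose (2*a+2*b+3) a * (a+2*b+3) := by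
    have := Nat.choose_succ_right_eq (2*a+2*b+3) a
    rw [show 2*a+2*b+3 - a = a+2*b+3 from by omega] at this
    exact this
  have h3 : (2*a+2*b+3) * Nat.choose (2*a+2*b+2) a
      = Nat.choose (2*a+2*b+3) (a+1) * (a+1) := by
    simpa using Nat.add_one_mul_choose_eq (2*a+2*b+2) a
  have e1 := congrArg (Nat.cast (R := ℚ)) h1
  have e2 := congrArg (Nat.cast (R := ℚ)) h2
  have e3 := congrArg (Nat.cast (R := ℚ)) h3
  push_cast at e1 e2 e3
  nlinarith [e1, e2, e3, sq_nonneg ((Nat.choose (2*a+2*b+3) a : ℚ))]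

theorem stmt_0 :
    tuenterCoeff 1 1 = 1 ∧
    ∀ j : ℕ, 1 ≤ j → ∀ k : ℕ, j ≤ k →
      tuenterCoeff j (k + 1) =
        (j : ℚ) ^ 2 * tuenterCoeff j k + (j : ℚ) * tuenterCoeff (j - 1) k := by
  constructor
  · simp [tuenterCoeff, catalanTriangle]
  · intro j hj k hk
    obtain ⟨m, rfl⟩ : ∃ m, j = m + 1 := ⟨j - 1, by omega⟩
    have hk1 : 1 ≤ k := le_trans hj hk
    have hA : tuenterCoeff (m+1) (k+1) - ((m+1 : ℕ) : ℚ)^2 * tuenterCoeff (m+1) k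
        = ((Nat.factorial (m+1) : ℚ) / (Nat.factorial (2*(m+1)-1) : ℚ)) *
          ∑ q ∈ Finset.Icc 1 (m+1),
            (-1 : ℚ) ^ (q + (m+1)) * catalanTriangle (m+1) q * (q : ℚ) ^ (2*k-1)
              * ((q : ℚ)^2 - ((m+1 : ℕ) : ℚ)^2) := by
      simp only [tuenterCoeff, Finset.mul_sum]
      rw [← Finset.sum_sub_distrib]
      refine Finset.sum_congr rfl fun q hq => ?_
      rw [show 2*(k+1)-1 = (2*k-1)+2 from by omega]
      push_cast
      ring
    have hB : ((Nat.factorial (m+1) : ℚ) / (Nat.factorial (2*(m+1)-1) : ℚ)) *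
          ∑ q ∈ Finset.Icc 1 (m+1),
            (-1 : ℚ) ^ (q + (m+1)) * catalanTriangle (m+1) q * (q : ℚ) ^ (2*k-1)
              * ((q : ℚ)^2 - ((m+1 : ℕ) : ℚ)^2)
        = ((m+1 : ℕ) : ℚ) * tuenterCoeff m k := by
      rw [Finset.sum_Icc_succ_top (by omega)]
      simp only [sub_self, mul_zero, add_zero]
      simp only [tuenterCoeff, catalanTriangle, Finset.mul_sum]
      refine Finset.sum_congr rfl fun q hq => ?_
      simp only [Finset.mem_Icc] at hq
      obtain ⟨b, rfl⟩ := Nat.exists_eq_add_of_le hq.1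
      obtain ⟨a, rfl⟩ := Nat.exists_eq_add_of_le hq.2
      rw [show (1+b+a+1) - (1+b) = a+1 from by omega,
          show (1+b+a) - (1+b) = a from by omega,
          show 2*(1+b+a+1) = 2*a+2*b+4 from by ring,
          show 2*(1+b+a) = 2*a+2*b+2 from by ring,
          show 2*a+2*b+4-1 = 2*a+2*b+3 from by omega,
          show 2*a+2*b+2-1 = 2*a+2*b+1 from by omega,
          show Nat.factorial (2*a+2*b+3)
              = (2*a+2*b+3) * ((2*a+2*b+2) * Nat.factorial (2*a+2*b+1)) from by
            rw [show 2*a+2*b+3 = (2*a+2*b+1)+1+1 from by ring,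
               Nat.factorial_succ, Nat.factorial_succ],
          show Nat.factorial (1+b+a+1) = (1+b+a+1) * Nat.factorial (1+b+a) from by
            rw [Nat.factorial_succ],
          show (1+b) + (1+b+a+1) = ((1+b)+(1+b+a)) + 1 from by ring,
          pow_succ]
      have hk2 := hkeyQ a b
      have hch : a ≤ 2*a+2*b+2 := by omega
      have hne1 : (Nat.factorial (1+b+a) : ℚ) ≠ 0 := by positivity
      have hne2 : (Nat.factorial (2*a+2*b+1) : ℚ) ≠ 0 := by positivity
      push_cast
      push_cast at hk2
      field_simp
      linear_combination ((1:ℚ)+b+a) * hk2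
    linarith [hA, hB, (by push_cast; ring : ((m+1:ℕ):ℚ) * tuenterCoeff (m+1-1) k = ((m+1:ℕ):ℚ) * tuenterCoeff m k)]
end

section
/- For every k ≥ 1 and every natural number n, the Tuenter polynomial satisfies P_k(n) = ∑_{j=1}^{k} c(j,k)·(n)_j, where c(j,k) = (j!/(2j−1)!)·∑_{q=1}^{j} (−1)^{q+j} B(j,q) q^{2k−1} with B(j,q) = (q/j)·C(2j, j−q), and (n)_j = n(n−1)(n−2)⋯(n−j+1) is the descending factorial. -/
/-- The Tuenter polynomials: `P 0 n = 1`,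
`P (k+1) n = n^2 * (P k n - P k (n-1)) + n * P k (n-1)`. -/
def tuenterP : ℕ → ℤ → ℤ
  | 0, _ => 1
  | k + 1, n => n ^ 2 * (tuenterP k n - tuenterP k (n - 1)) + n * tuenterP k (n - 1)

section TuenterAux
open Finset Polynomial

lemma catalanTriangle_eq (j q : ℕ) (h1 : 1 ≤ q) (h2 : q ≤ j) :
    catalanTriangle j q =
      (Nat.choose (2 * j - 1) (j - q) : ℚ) - (Nat.choose (2 * j - 1) (j + q) : ℚ) := by
  rcases eq_or_lt_of_le h2 with rfl | hlt
  · have hz : Nat.choose (2 * q - 1) (q + q) = 0 :=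
      Nat.choose_eq_zero_of_lt (by omega)
    have hq : (q:ℚ) ≠ 0 := by exact Nat.cast_ne_zero.2 (by omega)
    simp [catalanTriangle, Nat.sub_self, hz, div_self hq]
  · obtain ⟨d, rfl⟩ : ∃ d, j = q + d + 1 := ⟨j - q - 1, by omega⟩
    have e1 : 2 * (q + d + 1) - 1 = 2*q + 2*d + 1 := by omega
    have e2 : (q + d + 1) - q = d + 1 := by omega
    have e3 : (q + d + 1) + q = 2*q + d + 1 := by omega
    have e4 : 2 * (q + d + 1) = 2*q + 2*d + 2 := by omega
    rw [catalanTriangle, e1, e2, e3, e4]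
    rw [Nat.cast_choose ℚ (show d + 1 ≤ 2*q+2*d+2 by omega),
        Nat.cast_choose ℚ (show d + 1 ≤ 2*q+2*d+1 by omega),
        Nat.cast_choose ℚ (show 2*q+d+1 ≤ 2*q+2*d+1 by omega)]
    have f1 : 2*q+2*d+2 - (d+1) = 2*q+d+1 := by omega
    have f2 : 2*q+2*d+1 - (d+1) = 2*q+d := by omega
    have f3 : 2*q+2*d+1 - (2*q+d+1) = d := by omega
    rw [f1, f2, f3]
    have g1 : ((2*q+2*d+2).factorial : ℚ) = (2*q+2*d+2) * (2*q+2*d+1).factorial := by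
      rw [show 2*q+2*d+2 = (2*q+2*d+1) + 1 by ring, Nat.factorial_succ]; push_cast; ring
    have g2 : ((2*q+d+1).factorial : ℚ) = (2*q+d+1) * (2*q+d).factorial := by
      rw [show 2*q+d+1 = (2*q+d) + 1 by ring, Nat.factorial_succ]; push_cast; ring
    have g3 : ((d+1).factorial : ℚ) = (d+1) * d.factorial := by
      rw [Nat.factorial_succ]; push_cast; ring
    rw [g1, g2, g3]
    have n1 : (d.factorial : ℚ) ≠ 0 := by positivity
    have n2 : ((2*q+d).factorial : ℚ) ≠ 0 := by positivity
    have n3 : ((2*q+2*d+1).factorial : ℚ) ≠ 0 := by exact_mod_cast Nat.cast_ne_zero.2 (2*q+2*d+1).factorial_ne_zero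
    field_simp
    push_cast; ring

lemma catalanTriangle_step (q d : ℕ) (h1 : 1 ≤ q) :
    (((q:ℚ)+d+1)^2 - (q:ℚ)^2) * catalanTriangle (q+d+1) q
      = (2*(q:ℚ)+2*d+1) * (2*(q:ℚ)+2*d) * catalanTriangle (q+d) q := by
  have e1 : (q+d+1) - q = d + 1 := by omega
  have e2 : 2 * (q+d+1) = 2*q+2*d+2 := by omega
  have e3 : (q+d) - q = d := by omega
  have e4 : 2 * (q+d) = 2*q+2*d := by omega
  rw [catalanTriangle, catalanTriangle, e1, e2, e3, e4]
  rw [Nat.cast_choose ℚ (show d + 1 ≤ 2*q+2*d+2 by omega),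
      Nat.cast_choose ℚ (show d ≤ 2*q+2*d by omega)]
  have f1 : 2*q+2*d+2 - (d+1) = 2*q+d+1 := by omega
  have f2 : 2*q+2*d - d = 2*q+d := by omega
  rw [f1, f2]
  have g1 : ((2*q+2*d+2).factorial : ℚ) = (2*q+2*d+2) * ((2*q+2*d+1) * (2*q+2*d).factorial) := by
    rw [show 2*q+2*d+2 = (2*q+2*d+1) + 1 by ring, Nat.factorial_succ,
        show 2*q+2*d+1 = (2*q+2*d) + 1 by ring, Nat.factorial_succ]; push_cast; ring
  have g2 : ((2*q+d+1).factorial : ℚ) = (2*q+d+1) * (2*q+d).factorial := by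
    rw [show 2*q+d+1 = (2*q+d) + 1 by ring, Nat.factorial_succ]; push_cast; ring
  have g3 : ((d+1).factorial : ℚ) = (d+1) * d.factorial := by
    rw [Nat.factorial_succ]; push_cast; ring
  rw [g1, g2, g3]
  have n1 : (d.factorial : ℚ) ≠ 0 := by positivity
  have n2 : ((2*q+d).factorial : ℚ) ≠ 0 := by positivity
  have n3 : ((2*q+2*d).factorial : ℚ) ≠ 0 := by positivity
  have n4 : ((q:ℚ)+d) ≠ 0 := by
    have : (1:ℚ) ≤ (q:ℚ) := by exact_mod_cast h1
    nlinarith [Nat.cast_nonneg (α := ℚ) d]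
  have n5 : ((q:ℚ)+d+1) ≠ 0 := by positivity
  push_cast
  field_simp
  ring

lemma tuenterCoeff_zero (k : ℕ) : tuenterCoeff 0 k = 0 := by
  simp [tuenterCoeff]

lemma tuenterCoeff_one (k : ℕ) : tuenterCoeff 1 k = 1 := by
  simp [tuenterCoeff, catalanTriangle]

lemma key_sum (m e : ℕ) :
    ∑ q ∈ Finset.Icc 1 (m+2), (-1:ℚ)^(q+(m+2)) * catalanTriangle (m+2) q * (q:ℚ)^(e+2)
      = ((m:ℚ)+2)^2 * ∑ q ∈ Finset.Icc 1 (m+2), (-1:ℚ)^(q+(m+2)) * catalanTriangle (m+2) q * (q:ℚ)^e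
        + (2*(m:ℚ)+3)*(2*(m:ℚ)+2) *
          ∑ q ∈ Finset.Icc 1 (m+1), (-1:ℚ)^(q+(m+1)) * catalanTriangle (m+1) q * (q:ℚ)^e := by
  have h12 : 1 ≤ m + 2 := by omega
  rw [Finset.sum_Icc_succ_top h12 (fun q => (-1:ℚ)^(q+(m+2)) * catalanTriangle (m+2) q * (q:ℚ)^(e+2)),
      Finset.sum_Icc_succ_top h12 (fun q => (-1:ℚ)^(q+(m+2)) * catalanTriangle (m+2) q * (q:ℚ)^e)]
  have hsum : ∀ q ∈ Finset.Icc 1 (m+1),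
      (-1:ℚ)^(q+(m+2)) * catalanTriangle (m+2) q * (q:ℚ)^(e+2)
        = ((m:ℚ)+2)^2 * ((-1:ℚ)^(q+(m+2)) * catalanTriangle (m+2) q * (q:ℚ)^e)
          + (2*(m:ℚ)+3)*(2*(m:ℚ)+2) * ((-1:ℚ)^(q+(m+1)) * catalanTriangle (m+1) q * (q:ℚ)^e) := by
    intro q hq
    simp only [Finset.mem_Icc] at hq
    obtain ⟨d, hd⟩ : ∃ d, q + d = m + 1 := ⟨m + 1 - q, by omega⟩
    have hstep := catalanTriangle_step q d hq.1
    have hq1 : q + d + 1 = m + 2 := by omega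
    rw [hq1, hd] at hstep
    have hdq : (q:ℚ) + (d:ℚ) = (m:ℚ) + 1 := by exact_mod_cast hd
    have hcast : ((q:ℚ)+d+1) = ((m:ℚ)+2) ∧ (2*(q:ℚ)+2*d+1) = (2*(m:ℚ)+3)
        ∧ (2*(q:ℚ)+2*d) = (2*(m:ℚ)+2) := by
      refine ⟨by linarith, by linarith, by linarith⟩
    rw [hcast.1, hcast.2.1, hcast.2.2] at hstep
    have hsign : (-1:ℚ)^(q+(m+2)) = -(-1:ℚ)^(q+(m+1)) := by
      rw [show q+(m+2) = (q+(m+1))+1 by ring, pow_succ]; ring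
    rw [hsign, pow_add]
    linear_combination ((-1:ℚ)^(q+(m+1)) * (q:ℚ)^e) * hstep
  rw [Finset.sum_congr rfl hsum, Finset.sum_add_distrib, ← Finset.mul_sum, ← Finset.mul_sum]
  have htop : ((((m:ℕ)+2:ℕ)):ℚ)^(e+2) = (((m:ℕ)+2:ℕ):ℚ)^2 * (((m:ℕ)+2:ℕ):ℚ)^e := by
    rw [pow_add]; ring
  push_cast
  rw [pow_add]
  ring

lemma tuenterCoeff_rec (j k : ℕ) (hj : 1 ≤ j) (hk : 1 ≤ k) :
    tuenterCoeff j (k+1) = (j:ℚ)^2 * tuenterCoeff j k + (j:ℚ) * tuenterCoeff (j-1) k := by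
  obtain ⟨t, rfl⟩ : ∃ t, k = t + 1 := ⟨k - 1, by omega⟩
  rcases Nat.lt_or_ge j 2 with hj2 | hj2
  · interval_cases j
    simp [tuenterCoeff_one, tuenterCoeff_zero]
  · obtain ⟨m, rfl⟩ : ∃ m, j = m + 2 := ⟨j - 2, by omega⟩
    have e1 : 2 * (m+2) - 1 = 2*m+3 := by omega
    have e2 : (m+2) - 1 = m+1 := by omega
    have e3 : 2 * (m+1) - 1 = 2*m+1 := by omega
    have e4 : 2 * (t+1+1) - 1 = (2*t+1) + 2 := by omega
    have e5 : 2 * (t+1) - 1 = 2*t+1 := by omega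
    simp only [tuenterCoeff, e1, e2, e3, e4, e5]
    rw [key_sum m (2*t+1)]
    have g1 : ((2*m+3).factorial : ℚ) = (2*m+3) * ((2*m+2) * (2*m+1).factorial) := by
      rw [show 2*m+3 = (2*m+2) + 1 by ring, Nat.factorial_succ,
          show 2*m+2 = (2*m+1) + 1 by ring, Nat.factorial_succ]; push_cast; ring
    have g2 : ((m+2).factorial : ℚ) = (m+2) * (m+1).factorial := by
      rw [show m+2 = (m+1) + 1 by ring, Nat.factorial_succ]; push_cast; ring
    rw [g1, g2]
    have n1 : ((2*m+1).factorial : ℚ) ≠ 0 := by positivity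
    have n2 : ((m+1).factorial : ℚ) ≠ 0 := by positivity
    push_cast
    field_simp

lemma fwdDiff_pow_step (m : ℕ) : fwdDiff (1:ℚ) (fun x ↦ x^m)
    = ∑ i ∈ range m, (Nat.choose m i : ℚ) • (fun x : ℚ ↦ x^i) := by
  funext x
  simp only [fwdDiff, Finset.sum_apply, Pi.smul_apply, smul_eq_mul]
  rw [add_pow]
  rw [Finset.sum_range_succ]
  simp only [one_pow, Nat.choose_self, Nat.cast_one, mul_one, tsub_self, pow_zero]
  rw [add_sub_cancel_right]
  exact Finset.sum_congr rfl fun i _ => by ring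

lemma fwdDiff_pow_vanish : ∀ m : ℕ, ∀ n : ℕ, m < n →
    (fwdDiff (1:ℚ))^[n] (fun x ↦ x^m) = 0 := by
  intro m
  induction m using Nat.strong_induction_on with
  | _ m IH =>
    intro n hn
    obtain ⟨n', rfl⟩ : ∃ n', n = n' + 1 := ⟨n-1, by omega⟩
    rw [Function.iterate_succ_apply, fwdDiff_pow_step, fwdDiff_iter_finset_sum]
    apply Finset.sum_eq_zero
    intro i hi
    rw [fwdDiff_iter_const_smul, IH i (Finset.mem_range.mp hi) n' (by
      have := Finset.mem_range.mp hi; omega)]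
    simp

lemma vanish_sum (m e : ℕ) (hodd : Odd e) (he : 1 ≤ e) (hlt : e < 2*m+1) :
    ∑ q ∈ Finset.Icc 1 (m+1), (-1:ℚ)^(q+(m+1)) * catalanTriangle (m+1) q * (q:ℚ)^e = 0 := by
  set F : ℕ → ℚ := fun k ↦ (-1:ℚ)^(2*m+1-k) * (Nat.choose (2*m+1) k : ℚ) * (-(m:ℚ)+k)^e with hF
  -- the fwdDiff identity
  have hsum := fwdDiff_iter_eq_sum_shift (1:ℚ) (fun x : ℚ ↦ x^e) (2*m+1) (-(m:ℚ))
  rw [fwdDiff_pow_vanish e (2*m+1) hlt] at hsum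
  have hzero : (0:ℚ) = ∑ k ∈ range (2*m+1+1), F k := by
    simp only [Pi.zero_apply, zsmul_eq_mul, nsmul_eq_mul, mul_one, Int.cast_mul,
      Int.cast_pow, Int.cast_neg, Int.cast_one, Int.cast_natCast] at hsum
    exact hsum
  rw [show 2*m+1+1 = (m+1)+(m+1) by ring, Finset.sum_range_add] at hzero
  -- second half: k = m+1+i
  have hA : ∑ i ∈ range (m+1), F ((m+1)+i)
      = ∑ i ∈ range (m+1), (-1:ℚ)^(m+i) * (Nat.choose (2*m+1) (m-i) : ℚ) * ((1:ℚ)+i)^e := by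
    refine Finset.sum_congr rfl fun i hi => ?_
    have him : i ≤ m := by have := Finset.mem_range.mp hi; omega
    have h1 : 2*m+1-((m+1)+i) = m - i := by omega
    have h2 : Nat.choose (2*m+1) ((m+1)+i) = Nat.choose (2*m+1) (m-i) := by
      rw [← Nat.choose_symm (show (m+1)+i ≤ 2*m+1 by omega), show 2*m+1-((m+1)+i) = m-i by omega]
    have h3 : (-1:ℚ)^(m-i) = (-1:ℚ)^(m+i) := by
      rw [show m+i = (m-i)+2*i by omega, pow_add, pow_mul]; norm_num
    rw [hF]
    simp only [h1, h2, h3]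
    push_cast
    ring
  -- first half: reflect
  have hB : ∑ k ∈ range (m+1), F k
      = -∑ i ∈ range (m+1), (-1:ℚ)^(m+i) * (Nat.choose (2*m+1) (m+2+i) : ℚ) * ((1:ℚ)+i)^e := by
    rw [← Finset.sum_range_reflect]
    have step1 : ∀ j ∈ range (m+1), F (m+1-1-j)
        = (-1:ℚ)^(m+j) * (Nat.choose (2*m+1) (m-j) : ℚ) * (j:ℚ)^e := by
      intro j hj
      have hjm : j ≤ m := by have := Finset.mem_range.mp hj; omega
      have h0 : m+1-1-j = m - j := by omega
      have h1 : 2*m+1-(m-j) = m+1+j := by omega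
      have h2 : ((m-j : ℕ) : ℚ) = (m:ℚ) - j := by push_cast [hjm]; ring
      have h3 : (-(m:ℚ) + ((m:ℚ) - j)) = -(j:ℚ) := by ring
      have h4 : (-(j:ℚ))^e = -(j:ℚ)^e := hodd.neg_pow _
      have h5 : (-1:ℚ)^(m+1+j) = -(-1:ℚ)^(m+j) := by rw [show m+1+j = (m+j)+1 by ring, pow_succ]; ring
      rw [hF, h0]
      simp only [h1, h2, h3, h4, h5]
      ring
    rw [Finset.sum_congr rfl step1]
    rw [Finset.sum_range_succ' (fun j => (-1:ℚ)^(m+j) * (Nat.choose (2*m+1) (m-j) : ℚ) * (j:ℚ)^e) m]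
    have hg0 : (-1:ℚ)^(m+0) * (Nat.choose (2*m+1) (m-0) : ℚ) * ((0:ℕ):ℚ)^e = 0 := by
      rw [Nat.cast_zero, zero_pow (by omega : e ≠ 0)]; ring
    rw [hg0, add_zero]
    rw [Finset.sum_range_succ (fun i => (-1:ℚ)^(m+i) * (Nat.choose (2*m+1) (m+2+i) : ℚ) * ((1:ℚ)+i)^e) m]
    have htop : Nat.choose (2*m+1) (m+2+m) = 0 := Nat.choose_eq_zero_of_lt (by omega)
    rw [htop]
    have hmain : ∀ i ∈ range m,
        (-1:ℚ)^(m+(i+1)) * (Nat.choose (2*m+1) (m-(i+1)) : ℚ) * ((i+1:ℕ):ℚ)^e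
          = -((-1:ℚ)^(m+i) * (Nat.choose (2*m+1) (m+2+i) : ℚ) * ((1:ℚ)+i)^e) := by
      intro i hi
      have him : i < m := Finset.mem_range.mp hi
      have h2 : Nat.choose (2*m+1) (m-(i+1)) = Nat.choose (2*m+1) (m+2+i) := by
        rw [← Nat.choose_symm (show m+2+i ≤ 2*m+1 by omega),
            show 2*m+1-(m+2+i) = m-(i+1) by omega]
      rw [h2]
      push_cast
      ring
    rw [Finset.sum_congr rfl hmain, Finset.sum_neg_distrib]
    push_cast
    ring
  -- conclude
  have htarget : ∑ q ∈ Finset.Icc 1 (m+1), (-1:ℚ)^(q+(m+1)) * catalanTriangle (m+1) q * (q:ℚ)^e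
      = ∑ i ∈ range (m+1), ((-1:ℚ)^(m+i) * (Nat.choose (2*m+1) (m-i) : ℚ) * ((1:ℚ)+i)^e
          - (-1:ℚ)^(m+i) * (Nat.choose (2*m+1) (m+2+i) : ℚ) * ((1:ℚ)+i)^e) := by
    rw [← Finset.Ico_add_one_right_eq_Icc, Finset.sum_Ico_eq_sum_range]
    refine Finset.sum_congr (by norm_num) fun i hi => ?_
    have him : i ≤ m := by
      have := Finset.mem_range.mp hi; omega
    rw [catalanTriangle_eq (m+1) (1+i) (by omega) (by omega)]
    have h1 : 2*(m+1)-1 = 2*m+1 := by omega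
    have h2 : (m+1)-(1+i) = m-i := by omega
    have h3 : (m+1)+(1+i) = m+2+i := by omega
    rw [h1, h2, h3]
    push_cast
    ring
  rw [htarget, Finset.sum_sub_distrib]
  rw [← hA]
  have : ∑ i ∈ range (m+1), (-1:ℚ)^(m+i) * (Nat.choose (2*m+1) (m+2+i) : ℚ) * ((1:ℚ)+i)^e
      = -∑ k ∈ range (m+1), F k := by rw [hB]; ring
  rw [this]
  linarith [hzero]

lemma tuenterCoeff_vanish (k : ℕ) (hk : 1 ≤ k) : tuenterCoeff (k+1) k = 0 := by
  obtain ⟨t, rfl⟩ : ∃ t, k = t + 1 := ⟨k - 1, by omega⟩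
  rw [tuenterCoeff, vanish_sum (t+1) (2*(t+1)-1) ⟨t, by omega⟩ (by omega) (by omega), mul_zero]

lemma poch_shift (j : ℕ) (x : ℚ) :
    (descPochhammer ℚ (j+1)).eval x = x * (descPochhammer ℚ j).eval (x-1) := by
  rw [descPochhammer_succ_left]
  simp [eval_comp]

lemma poch_key (j : ℕ) (x : ℚ) :
    x^2 * (descPochhammer ℚ j).eval x - (x^2 - x) * (descPochhammer ℚ j).eval (x-1)
      = (j:ℚ)^2 * (descPochhammer ℚ j).eval x + ((j:ℚ)+1) * (descPochhammer ℚ (j+1)).eval x := by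
  have h1 := descPochhammer_succ_eval (S := ℚ) j x
  have h3 : (x^2 - x) * (descPochhammer ℚ j).eval (x-1)
      = (x-1) * ((descPochhammer ℚ j).eval x * (x - (j:ℚ))) := by
    rw [← h1, poch_shift]; ring
  rw [h3, h1]; ring

lemma main_lemma : ∀ k : ℕ, 1 ≤ k → ∀ x : ℤ,
    (tuenterP k x : ℚ) = ∑ j ∈ Finset.Icc 1 k, tuenterCoeff j k * (descPochhammer ℚ j).eval (x:ℚ) := by
  intro k
  induction k with
  | zero => omega
  | succ k IH =>
    intro _ x
    rcases Nat.eq_zero_or_pos k with rfl | hk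
    · show ((x ^ 2 * (tuenterP 0 x - tuenterP 0 (x - 1)) + x * tuenterP 0 (x-1) : ℤ) : ℚ) = _
      show ((x ^ 2 * (1 - 1) + x * 1 : ℤ) : ℚ) = _
      rw [Finset.Icc_self, Finset.sum_singleton, tuenterCoeff_one]
      push_cast
      simp
    · have IH' := IH hk
      show ((x ^ 2 * (tuenterP k x - tuenterP k (x - 1)) + x * tuenterP k (x-1) : ℤ) : ℚ) = _
      push_cast
      rw [IH' x, IH' (x-1)]
      push_cast
      set X : ℚ := (x:ℚ) with hX
      -- LHS rearrangement
      have lhs_eq : X ^ 2 * ((∑ j ∈ Icc 1 k, tuenterCoeff j k * (descPochhammer ℚ j).eval X)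
            - ∑ j ∈ Icc 1 k, tuenterCoeff j k * (descPochhammer ℚ j).eval (X - 1))
          + X * ∑ j ∈ Icc 1 k, tuenterCoeff j k * (descPochhammer ℚ j).eval (X - 1)
          = ∑ j ∈ Icc 1 k, (((j:ℚ)^2 * tuenterCoeff j k) * (descPochhammer ℚ j).eval X
              + (((j:ℚ)+1) * tuenterCoeff j k) * (descPochhammer ℚ (j+1)).eval X) := by
        rw [mul_sub, Finset.mul_sum, Finset.mul_sum, Finset.mul_sum, ← Finset.sum_sub_distrib,
            ← Finset.sum_add_distrib]
        refine Finset.sum_congr rfl fun j _ => ?_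
        have := poch_key j X
        linear_combination tuenterCoeff j k * this
      rw [lhs_eq, Finset.sum_add_distrib]
      -- RHS expansion
      have rhs_eq : ∑ j ∈ Icc 1 (k+1), tuenterCoeff j (k+1) * (descPochhammer ℚ j).eval X
          = ∑ j ∈ Icc 1 (k+1), (((j:ℚ)^2 * tuenterCoeff j k) * (descPochhammer ℚ j).eval X
              + ((j:ℚ) * tuenterCoeff (j-1) k) * (descPochhammer ℚ j).eval X) := by
        refine Finset.sum_congr rfl fun j hj => ?_
        have hj1 : 1 ≤ j := (Finset.mem_Icc.mp hj).1
        rw [tuenterCoeff_rec j k hj1 hk]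
        ring
      rw [rhs_eq, Finset.sum_add_distrib]
      congr 1
      · -- squares part
        rw [Finset.sum_Icc_succ_top (show 1 ≤ k+1 by omega), tuenterCoeff_vanish k hk]
        push_cast
        ring
      · -- shifted part
        rw [show (k:ℕ)+1 = k+1 from rfl]
        rw [← Finset.Ico_add_one_right_eq_Icc, Finset.sum_Ico_eq_sum_range,
            ← Finset.Ico_add_one_right_eq_Icc, Finset.sum_Ico_eq_sum_range]
        simp only [show k+1+1-1 = k+1 by omega, show k+1-1 = k by omega]
        rw [Finset.sum_range_succ' _ k]
        have h0 : ((1+0:ℕ):ℚ) * tuenterCoeff (1+0-1) k * (descPochhammer ℚ (1+0)).eval X = 0 := by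
          norm_num [tuenterCoeff_zero]
        rw [h0, add_zero]
        refine Finset.sum_congr rfl fun i _ => ?_
        have e1 : 1+(i+1)-1 = 1+i := by omega
        have e2 : 1+(i+1) = (1+i)+1 := by omega
        rw [e1, e2]
        push_cast
        ring

end TuenterAux

theorem stmt_1 :
    ∀ k : ℕ, 1 ≤ k → ∀ n : ℕ,
      (tuenterP k (n : ℤ) : ℚ) =
        ∑ j ∈ Finset.Icc 1 k, tuenterCoeff j k * (descPochhammer ℚ j).eval (n : ℚ) := by
  intro k hk n
  have h := main_lemma k hk (n : ℤ)
  rw [h]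
  push_cast
  rfl
end

section
/- For every k ≥ 0 and every positive integer n, S_{2k+1}(n) = P_k(n)·n·C(2n, n), where S_r(n) = ∑_{j=0}^{2n} C(2n, j)·|n−j|^r and P_k is the k-th Tuenter polynomial. -/
/-- `S r n = ∑_{j=0}^{2n} C(2n, j) |n - j|^r`. -/
def S (r n : ℕ) : ℤ :=
  ∑ j ∈ Finset.range (2 * n + 1), (Nat.choose (2 * n) j : ℤ) * |(n : ℤ) - (j : ℤ)| ^ r

open Finset

lemma pascal_step (m : ℕ) (g : ℕ → ℤ) :
    ∑ j ∈ range (m + 2), (Nat.choose (m+1) j : ℤ) * g j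
    = ∑ j ∈ range (m + 1), (Nat.choose m j : ℤ) * (g j + g (j+1)) := by
  rw [Finset.sum_range_succ' (fun j => (Nat.choose (m+1) j : ℤ) * g j) (m+1)]
  have h1 : ∀ j ∈ range (m+1), (Nat.choose (m+1) (j+1) : ℤ) * g (j+1)
      = (Nat.choose m j : ℤ) * g (j+1) + (Nat.choose m (j+1) : ℤ) * g (j+1) := by
    intro j _
    rw [Nat.choose_succ_succ']
    push_cast; ring
  rw [Finset.sum_congr rfl h1, Finset.sum_add_distrib]
  have h2 : ∑ j ∈ range (m+1), (Nat.choose m (j+1) : ℤ) * g (j+1)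
      = ∑ j ∈ range (m+1), (Nat.choose m j : ℤ) * g j - (Nat.choose m 0 : ℤ) * g 0 := by
    have := Finset.sum_range_succ' (fun j => (Nat.choose m j : ℤ) * g j) (m+1)
    have h3 : ∑ j ∈ range (m+1+1), (Nat.choose m j : ℤ) * g j
        = ∑ j ∈ range (m+1), (Nat.choose m j : ℤ) * g j := by
      rw [Finset.sum_range_succ]; simp [Nat.choose_eq_zero_of_lt]
    rw [h3] at this
    linarith [this]
  rw [h2]
  have h4 : ∑ j ∈ range (m+1), (Nat.choose m j : ℤ) * (g j + g (j+1))
      = ∑ j ∈ range (m+1), (Nat.choose m j : ℤ) * g j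
        + ∑ j ∈ range (m+1), (Nat.choose m j : ℤ) * g (j+1) := by
    rw [← Finset.sum_add_distrib]; apply Finset.sum_congr rfl; intros; ring
  rw [h4]; simp; ring

lemma key_choose (m : ℕ) :
    ((m:ℤ)+1) * Nat.choose (2*m+2) (m+1) = (4*(m:ℤ)+2) * Nat.choose (2*m) m := by
  have e1 : (2*m+2) * Nat.choose (2*m+1) m = Nat.choose (2*m+2) (m+1) * (m+1) :=
    Nat.add_one_mul_choose_eq (2*m+1) m
  have e2 : Nat.choose (2*m+1) m = Nat.choose (2*m+1) (m+1) := by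
    rw [← Nat.choose_symm (by omega : m+1 ≤ 2*m+1)]
    congr 1; omega
  have e3 : (2*m+1) * Nat.choose (2*m) m = Nat.choose (2*m+1) (m+1) * (m+1) :=
    Nat.add_one_mul_choose_eq (2*m) m
  have hc : ((m:ℤ)+1) * (((m:ℤ)+1) * Nat.choose (2*m+2) (m+1))
      = ((m:ℤ)+1) * ((4*(m:ℤ)+2) * Nat.choose (2*m) m) := by
    have e1' : ((2*(m:ℤ)+2)) * Nat.choose (2*m+1) m = (Nat.choose (2*m+2) (m+1) : ℤ) * ((m:ℤ)+1) := by
      exact_mod_cast congrArg (Nat.cast : ℕ → ℤ) e1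
    have e3' : ((2*(m:ℤ)+1)) * Nat.choose (2*m) m = (Nat.choose (2*m+1) (m+1) : ℤ) * ((m:ℤ)+1) := by
      exact_mod_cast congrArg (Nat.cast : ℕ → ℤ) e3
    rw [e2] at e1'
    linear_combination (-((m:ℤ)+1)) * e1' + (-(2*(m:ℤ)+2)) * e3'
  exact mul_left_cancel₀ (by positivity) hc

lemma term_choose (m j : ℕ) (hj : j ≤ 2*m) :
    ((j:ℤ)+1) * ((2*(m:ℤ)+1) - j) * Nat.choose (2*m+2) (j+1)
    = (2*(m:ℤ)+2) * (2*(m:ℤ)+1) * Nat.choose (2*m) j := by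
  have e1 : (2*m+2) * Nat.choose (2*m+1) j = Nat.choose (2*m+2) (j+1) * (j+1) :=
    Nat.add_one_mul_choose_eq (2*m+1) j
  have e2 : Nat.choose (2*m+1) (j+1) * (j+1) = Nat.choose (2*m+1) j * (2*m+1 - j) :=
    Nat.choose_succ_right_eq (2*m+1) j
  have e3 : (2*m+1) * Nat.choose (2*m) j = Nat.choose (2*m+1) (j+1) * (j+1) :=
    Nat.add_one_mul_choose_eq (2*m) j
  have e1' : (2*(m:ℤ)+2) * Nat.choose (2*m+1) j = (Nat.choose (2*m+2) (j+1) : ℤ) * ((j:ℤ)+1) := by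
    exact_mod_cast congrArg (Nat.cast : ℕ → ℤ) e1
  have e2' : (Nat.choose (2*m+1) (j+1) : ℤ) * ((j:ℤ)+1)
      = (Nat.choose (2*m+1) j : ℤ) * ((2*(m:ℤ)+1) - j) := by
    have h := congrArg (Nat.cast : ℕ → ℤ) e2
    push_cast [Nat.cast_sub (show j ≤ 2*m+1 by omega)] at h
    linear_combination h
  have e3' : (2*(m:ℤ)+1) * Nat.choose (2*m) j = (Nat.choose (2*m+1) (j+1) : ℤ) * ((j:ℤ)+1) := by
    exact_mod_cast congrArg (Nat.cast : ℕ → ℤ) e3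
  linear_combination (-(2*(m:ℤ)+1-(j:ℤ))) * e1' + (-(2*(m:ℤ)+2)) * e2' + (-(2*(m:ℤ)+2)) * e3'

lemma abs_step (d : ℤ) : |d+1| + |d-1| = 2*|d| + (if d = 0 then 2 else 0) := by
  rcases lt_trichotomy d 0 with h | h | h
  · rw [abs_of_nonpos (by omega), abs_of_nonpos (by omega), abs_of_neg h, if_neg (by omega)]
    ring
  · subst h; norm_num
  · rw [abs_of_nonneg (by omega), abs_of_nonneg (by omega), abs_of_pos h, if_neg (by omega)]
    ring

lemma S_one (n : ℕ) : S 1 n = (n:ℤ) * Nat.choose (2*n) n := by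
  induction n with
  | zero => simp [S]
  | succ n ih =>
    have key : S 1 (n+1) = 4 * S 1 n + 2 * Nat.choose (2*n) n := by
      rw [S]
      rw [show 2*(n+1)+1 = (2*n+1)+2 by ring, show 2*(n+1) = (2*n+1)+1 by ring]
      push_cast
      rw [pascal_step (2*n+1) (fun j => |(n:ℤ) + 1 - (j:ℤ)| ^ 1)]
      push_cast
      rw [show (2*n+1)+1 = (2*n)+2 by ring]
      rw [pascal_step (2*n) (fun j =>
        |(n:ℤ) + 1 - (j:ℤ)| ^ 1 + |(n:ℤ) + 1 - ((j:ℤ)+1)| ^ 1)]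
      push_cast
      have step : ∀ j ∈ range (2*n+1),
          (Nat.choose (2*n) j : ℤ) *
            ((|(n:ℤ) + 1 - (j:ℤ)| ^ 1 + |(n:ℤ) + 1 - ((j:ℤ)+1)| ^ 1)
             + (|(n:ℤ) + 1 - ((j:ℤ)+1)| ^ 1 + |(n:ℤ) + 1 - (((j:ℤ)+1)+1)| ^ 1))
          = 4 * ((Nat.choose (2*n) j : ℤ) * |(n:ℤ) - (j:ℤ)| ^ 1)
            + (if j = n then 2 * (Nat.choose (2*n) n : ℤ) else 0) := by
        intro j hj
        have hd := abs_step ((n:ℤ) - (j:ℤ))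
        have e1 : (n:ℤ) + 1 - (j:ℤ) = ((n:ℤ) - (j:ℤ)) + 1 := by ring
        have e2 : (n:ℤ) + 1 - (((j:ℤ)+1)+1) = ((n:ℤ) - (j:ℤ)) - 1 := by ring
        have e3 : (n:ℤ) + 1 - ((j:ℤ)+1) = (n:ℤ) - (j:ℤ) := by ring
        rw [e1, e2, e3]
        simp only [pow_one]
        by_cases h : j = n
        · subst h
          rw [if_pos rfl] at *
          rw [if_pos (show (j:ℤ) - (j:ℤ) = 0 by ring)] at hd
          linear_combination ((Nat.choose (2*j) j : ℤ)) * hd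
        · have hne : ¬ ((n:ℤ) - (j:ℤ) = 0) := by
            intro hc
            apply h
            have hje : (j:ℤ) = (n:ℤ) := by linarith [sub_eq_zero.mp hc]
            exact_mod_cast hje
          rw [if_neg h]
          rw [if_neg hne] at hd
          linear_combination ((Nat.choose (2*n) j : ℤ)) * hd
      rw [Finset.sum_congr rfl step, Finset.sum_add_distrib,
        Finset.sum_ite_eq' (range (2*n+1)) n (fun _ => 2 * (Nat.choose (2*n) n : ℤ)),
        if_pos (by simp; omega), ← Finset.mul_sum]
      rw [S]
    rw [key, ih]
    have := key_choose n
    rw [show 2*(n+1) = 2*n+2 by ring]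
    push_cast
    first
    | linear_combination this
    | linear_combination -this


lemma S_rec (r m : ℕ) :
    S (r+2) (m+1) = ((m:ℤ)+1)^2 * S r (m+1) - 2*((m:ℤ)+1)*(2*(m:ℤ)+1) * S r m := by
  have habs : ∀ x : ℤ, |x| ^ (r+2) = x^2 * |x| ^ r := by
    intro x
    rw [pow_add, sq_abs]
    ring
  have step1 : S (r+2) (m+1)
      = ((m:ℤ)+1)^2 * S r (m+1)
        - ∑ j ∈ range (2*m+3),
            ((j:ℤ) * ((2*(m:ℤ)+2) - (j:ℤ))) * (Nat.choose (2*m+2) j : ℤ)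
              * |((m:ℤ)+1) - (j:ℤ)| ^ r := by
    rw [S, S]
    rw [show 2*(m+1)+1 = 2*m+3 by ring, show 2*(m+1) = 2*m+2 by ring]
    push_cast
    rw [Finset.mul_sum, ← Finset.sum_sub_distrib]
    apply Finset.sum_congr rfl
    intro j hj
    rw [habs]
    ring
  have step2 : ∑ j ∈ range (2*m+3),
        ((j:ℤ) * ((2*(m:ℤ)+2) - (j:ℤ))) * (Nat.choose (2*m+2) j : ℤ)
          * |((m:ℤ)+1) - (j:ℤ)| ^ r
      = 2*((m:ℤ)+1)*(2*(m:ℤ)+1) * S r m := by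
    rw [show (2*m+3) = (2*m+2)+1 by ring]
    rw [Finset.sum_range_succ' (fun j => ((j:ℤ) * ((2*(m:ℤ)+2) - (j:ℤ)))
        * (Nat.choose (2*m+2) j : ℤ) * |((m:ℤ)+1) - (j:ℤ)| ^ r) (2*m+2)]
    push_cast
    rw [Finset.sum_range_succ]
    have hlast : ((2*m+1 : ℕ):ℤ) = 2*(m:ℤ)+1 := by push_cast; ring
    rw [S, Finset.mul_sum]
    have hz1 : ((((2*m+1:ℕ)):ℤ) + 1) * (2 * (m:ℤ) + 2 - (((2*m+1:ℕ):ℤ) + 1))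
        * (Nat.choose (2*m+2) ((2*m+1)+1) : ℤ) * |(m:ℤ) + 1 - (((2*m+1:ℕ):ℤ) + 1)| ^ r = 0 := by
      rw [hlast]; ring
    rw [hz1]
    simp only [Nat.cast_zero, zero_mul, mul_zero, zero_add, add_zero]
    apply Finset.sum_congr rfl
    intro j hj
    have hj' : j ≤ 2*m := by have := mem_range.mp hj; omega
    have hkey := term_choose m j hj'
    have e : (m:ℤ) + 1 - ((j:ℤ) + 1) = (m:ℤ) - (j:ℤ) := by ring
    rw [e]
    linear_combination (|(m:ℤ) - (j:ℤ)| ^ r) * hkey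
  rw [step1, step2]

lemma main_all (k n : ℕ) :
    S (2*k+1) n = tuenterP k (n:ℤ) * (n:ℤ) * (Nat.choose (2*n) n : ℤ) := by
  induction k generalizing n with
  | zero =>
    rw [show 2*0+1 = 1 by ring, S_one]
    simp [tuenterP]
  | succ k ih =>
    cases n with
    | zero => simp [S]
    | succ m =>
      rw [show 2*(k+1)+1 = (2*k+1)+2 by ring, S_rec (2*k+1) m, ih (m+1), ih m]
      have hC := key_choose m
      have hP : tuenterP (k+1) ((m:ℤ)+1)
          = ((m:ℤ)+1)^2 * (tuenterP k ((m:ℤ)+1) - tuenterP k ((m:ℤ)))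
            + ((m:ℤ)+1) * tuenterP k (m:ℤ) := by
        simp [tuenterP, show ((m:ℤ)+1) - 1 = (m:ℤ) by ring]
      rw [show 2*(m+1) = 2*m+2 by ring]
      push_cast
      rw [hP]
      linear_combination (tuenterP k (m:ℤ) * (m:ℤ) * ((m:ℤ)+1)) * hC

theorem stmt_3 :
    ∀ k : ℕ, ∀ n : ℕ, 1 ≤ n →
      S (2 * k + 1) n = tuenterP k (n : ℤ) * (n : ℤ) * (Nat.choose (2 * n) n : ℤ) := by
  intro k n _
  exact main_all k n
end

section
/- For every odd integer r ≥ 1 and every positive integer n, the sums S_r(n) = ∑_{j=0}^{2n} C(2n, j)·|n−j|^r satisfy the recurrence S_{r+2}(n) = n²·S_r(n) − 2n(2n−1)·S_r(n−1). -/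
lemma nat_key (m i : ℕ) (hi : i ≤ 2 * m) :
    (i + 1) * ((2 * m + 1 - i) * Nat.choose (2 * m + 2) (i + 1))
      = (2 * m + 2) * ((2 * m + 1) * Nat.choose (2 * m) i) := by
  have h1 : Nat.choose (2 * m + 2) (i + 1) * (i + 1)
      = (2 * m + 2) * Nat.choose (2 * m + 1) i := by
    simpa [Nat.succ_eq_add_one] using (Nat.add_one_mul_choose_eq (2 * m + 1) i).symm
  have h2 : (2 * m + 1 - i) * Nat.choose (2 * m + 1) i
      = (2 * m + 1) * Nat.choose (2 * m) i := by
    have hsym : Nat.choose (2 * m + 1) (2 * m + 1 - i) = Nat.choose (2 * m + 1) i :=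
      Nat.choose_symm (by omega)
    have hs : 2 * m + 1 - i = (2 * m - i) + 1 := by omega
    have h3 : Nat.choose (2 * m + 1) ((2 * m - i) + 1) * ((2 * m - i) + 1)
        = (2 * m + 1) * Nat.choose (2 * m) (2 * m - i) := by
      simpa [Nat.succ_eq_add_one] using (Nat.add_one_mul_choose_eq (2 * m) (2 * m - i)).symm
    have hsym2 : Nat.choose (2 * m) (2 * m - i) = Nat.choose (2 * m) i :=
      Nat.choose_symm (by omega)
    rw [← hsym, hs, mul_comm, h3, hsym2]
  calc (i + 1) * ((2 * m + 1 - i) * Nat.choose (2 * m + 2) (i + 1))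
      = (2 * m + 1 - i) * (Nat.choose (2 * m + 2) (i + 1) * (i + 1)) := by ring
    _ = (2 * m + 1 - i) * ((2 * m + 2) * Nat.choose (2 * m + 1) i) := by rw [h1]
    _ = (2 * m + 2) * ((2 * m + 1 - i) * Nat.choose (2 * m + 1) i) := by ring
    _ = (2 * m + 2) * ((2 * m + 1) * Nat.choose (2 * m) i) := by rw [h2]
lemma int_key (m i : ℕ) (hi : i ≤ 2 * m) :
    ((i : ℤ) + 1) * ((2 * (m : ℤ) + 1 - i) * (Nat.choose (2 * m + 2) (i + 1) : ℤ))
      = (2 * (m : ℤ) + 2) * ((2 * (m : ℤ) + 1) * (Nat.choose (2 * m) i : ℤ)) := by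
  have h := nat_key m i hi
  have h' : (((i + 1) * ((2 * m + 1 - i) * Nat.choose (2 * m + 2) (i + 1)) : ℕ) : ℤ)
      = (((2 * m + 2) * ((2 * m + 1) * Nat.choose (2 * m) i) : ℕ) : ℤ) := by exact_mod_cast h
  have hc : ((2 * m + 1 - i : ℕ) : ℤ) = 2 * (m : ℤ) + 1 - i := by
    have : i ≤ 2 * m + 1 := by omega
    push_cast [this]; ring
  push_cast [hc] at h'
  linarith [h']

theorem stmt_5 :
    ∀ r : ℕ, Odd r → 1 ≤ r → ∀ n : ℕ, 1 ≤ n →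
      S (r + 2) n = (n : ℤ) ^ 2 * S r n - 2 * (n : ℤ) * (2 * (n : ℤ) - 1) * S r (n - 1) := by
  intro r _hodd _hr n hn
  obtain ⟨m, rfl⟩ : ∃ m, n = m + 1 := ⟨n - 1, by omega⟩
  simp only [S, Nat.add_sub_cancel]
  push_cast
  have key : ∑ j ∈ Finset.range (2 * (m + 1) + 1),
      ((2 * (m + 1)).choose j : ℤ) * |(m : ℤ) + 1 - j| ^ r * ((j : ℤ) * (2 * ((m : ℤ) + 1) - j))
      = 2 * ((m : ℤ) + 1) * (2 * ((m : ℤ) + 1) - 1) *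
        ∑ j ∈ Finset.range (2 * m + 1), ((2 * m).choose j : ℤ) * |(m : ℤ) - j| ^ r := by
    rw [show 2 * (m + 1) + 1 = (2 * m + 2) + 1 from by ring, Finset.sum_range_succ,
      Finset.sum_range_succ']
    rw [Finset.mul_sum]
    have : ∀ i ∈ Finset.range (2 * m + 1),
        ((2 * (m + 1)).choose (i + 1) : ℤ) * |(m : ℤ) + 1 - ((i : ℤ) + 1)| ^ r *
          (((i : ℤ) + 1) * (2 * ((m : ℤ) + 1) - ((i : ℤ) + 1)))
        = 2 * ((m : ℤ) + 1) * (2 * ((m : ℤ) + 1) - 1) *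
          (((2 * m).choose i : ℤ) * |(m : ℤ) - i| ^ r) := by
      intro i hi
      have hi' : i ≤ 2 * m := by
        have := Finset.mem_range.mp hi; omega
      have hk := int_key m i hi'
      have habs : |(m : ℤ) + 1 - ((i : ℤ) + 1)| = |(m : ℤ) - i| := by
        congr 1; ring
      have hch : (2 * (m + 1)).choose (i + 1) = (2 * m + 2).choose (i + 1) := by
        rw [show 2 * (m + 1) = 2 * m + 2 from by ring]
      rw [habs, hch]
      linear_combination |(m : ℤ) - (i : ℤ)| ^ r * hk
    push_cast
    rw [Finset.sum_congr rfl this]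
    ring
  rw [← key, Finset.mul_sum, ← Finset.sum_sub_distrib]
  refine Finset.sum_congr rfl fun j hj => ?_
  rw [pow_add, sq_abs]
  ring
end

section
/- For every j ≥ 1, the diagonal coefficient satisfies c(j,j) = j!, where c(j,k) = (j!/(2j−1)!)·∑_{q=1}^{j} (−1)^{q+j} B(j,q) q^{2k−1} with B(j,q) = (q/j)·C(2j, j−q). -/
open Finset fwdDiff

lemma fwdDiff_pow_q (m : ℕ) :
    Δ_[(1:ℚ)] (fun x : ℚ ↦ x ^ m) = fun x ↦ ∑ k ∈ range m, (m.choose k : ℚ) * x ^ k := by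
  ext x
  simp only [fwdDiff]
  rw [add_pow, Finset.sum_range_succ]
  simp [mul_comm]

lemma fwdDiff_iter_pow_zero : ∀ m n : ℕ, m < n →
    (Δ_[(1:ℚ)])^[n] (fun x : ℚ ↦ x ^ m) = fun _ ↦ 0 := by
  intro m
  induction m using Nat.strong_induction_on with
  | _ m IH =>
    intro n hn
    obtain ⟨n', rfl⟩ : ∃ n', n = n' + 1 := ⟨n - 1, by omega⟩
    rw [Function.iterate_succ_apply, fwdDiff_pow_q]
    have : (fun x : ℚ ↦ ∑ k ∈ range m, (m.choose k : ℚ) * x ^ k)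
        = ∑ k ∈ range m, (m.choose k : ℚ) • (fun x : ℚ ↦ x ^ k) := by
      ext x; simp
    rw [this, fwdDiff_iter_finset_sum]
    ext x
    rw [Finset.sum_apply]
    apply Finset.sum_eq_zero
    intro k hk
    rw [Finset.mem_range] at hk
    rw [fwdDiff_iter_const_smul, Pi.smul_apply, IH k hk n' (by omega)]
    simp

lemma fwdDiff_iter_pow_diag (n : ℕ) :
    (Δ_[(1:ℚ)])^[n] (fun x : ℚ ↦ x ^ n) = fun _ ↦ (n.factorial : ℚ) := by
  induction n with
  | zero => ext x; simp
  | succ n IH =>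
    rw [Function.iterate_succ_apply, fwdDiff_pow_q]
    have : (fun x : ℚ ↦ ∑ k ∈ range (n+1), ((n+1).choose k : ℚ) * x ^ k)
        = ∑ k ∈ range (n+1), ((n+1).choose k : ℚ) • (fun x : ℚ ↦ x ^ k) := by
      ext x; simp
    rw [this, fwdDiff_iter_finset_sum]
    ext x
    rw [Finset.sum_apply, Finset.sum_range_succ]
    rw [Finset.sum_eq_zero (fun k hk => by
      rw [Finset.mem_range] at hk
      rw [fwdDiff_iter_const_smul, Pi.smul_apply, fwdDiff_iter_pow_zero k n hk]; simp)]
    rw [fwdDiff_iter_const_smul, Pi.smul_apply, IH]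
    simp only [zero_add, smul_eq_mul, Nat.choose_succ_self_right]
    push_cast [Nat.factorial_succ]
    ring

lemma tuenter_sum_key (j : ℕ) (hj : 1 ≤ j) :
    2 * ∑ q ∈ Icc 1 j, (-1:ℚ)^(q+j) * (((2*j).choose (j-q) : ℕ) : ℚ) * (q:ℚ)^(2*j)
      = (((2*j).factorial : ℕ) : ℚ) := by
  set g : ℕ → ℚ := fun k ↦ ((-1:ℚ)^(2*j-k) * (((2*j).choose k : ℕ) : ℚ)) * (((k:ℚ)) - j)^(2*j)
    with hg
  set t : ℕ → ℚ := fun q ↦ (-1:ℚ)^(q+j) * (((2*j).choose (j-q) : ℕ) : ℚ) * (q:ℚ)^(2*j) with ht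
  have hmain : ∑ k ∈ range (2*j+1), g k = (((2*j).factorial : ℕ) : ℚ) := by
    have := fwdDiff_iter_eq_sum_shift (1:ℚ) (fun x : ℚ ↦ x ^ (2*j)) (2*j) (-(j:ℚ))
    rw [fwdDiff_iter_pow_diag] at this
    refine Eq.trans ?_ (this.symm.trans rfl)
    apply Finset.sum_congr rfl
    intro k _
    simp only [hg, zsmul_eq_mul, nsmul_eq_mul, mul_one]
    push_cast
    ring
  have hgj : g j = 0 := by
    simp only [hg]
    rw [sub_self, zero_pow (by positivity), mul_zero]
  have hlow : ∀ q ∈ Icc 1 j, g (j - q) = t q := by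
    intro q hq
    rw [Finset.mem_Icc] at hq
    simp only [hg, ht]
    have h1 : 2*j - (j-q) = j + q := by omega
    have h4 : (-1:ℚ)^(j+q) = (-1:ℚ)^(q+j) := by rw [add_comm]
    rw [h1, Nat.cast_sub hq.2, h4, show ((j:ℚ) - (q:ℚ)) - (j:ℚ) = -(q:ℚ) by ring,
      (even_two_mul j).neg_pow]
  have hhigh : ∀ q ∈ Icc 1 j, g (j + q) = t q := by
    intro q hq
    rw [Finset.mem_Icc] at hq
    simp only [hg, ht]
    have h1 : 2*j - (j+q) = j - q := by omega
    have h2 : ((j:ℚ) + (q:ℚ)) - j = (q:ℚ) := by ring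
    have h3 : (2*j).choose (j+q) = (2*j).choose (j-q) := by
      have h := Nat.choose_symm (show j + q ≤ 2*j by omega)
      rw [show 2*j - (j+q) = j - q by omega] at h
      exact h.symm
    have h4 : (-1:ℚ)^(j-q) = (-1:ℚ)^(q+j) := by
      have he : q + j = (j - q) + 2*q := by omega
      rw [he, pow_add, pow_mul, neg_one_sq, one_pow, mul_one]
    rw [h1, h3, h4]
    push_cast
    ring
  have hsplit : ∑ k ∈ range (2*j+1), g k
      = (∑ q ∈ Icc 1 j, t q) + g j + ∑ q ∈ Icc 1 j, t q := by
    rw [Finset.range_eq_Ico,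
      ← Finset.sum_Ico_consecutive g (by omega : 0 ≤ j) (by omega : j ≤ 2*j+1),
      ← Finset.sum_Ico_consecutive g (by omega : j ≤ j+1) (by omega : j+1 ≤ 2*j+1),
      Nat.Ico_succ_singleton, Finset.sum_singleton, ← add_assoc]
    congr 1
    · congr 1
      apply Finset.sum_nbij' (fun k ↦ j - k) (fun q ↦ j - q)
      · intro a ha; simp only [Finset.mem_Ico, Finset.mem_Icc] at *; omega
      · intro a ha; simp only [Finset.mem_Ico, Finset.mem_Icc] at *; omega
      · intro a ha; simp only [Finset.mem_Ico] at ha; omega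
      · intro a ha; simp only [Finset.mem_Icc] at ha; omega
      · intro a ha
        simp only [Finset.mem_Ico] at ha
        have h := hlow (j - a) (by simp only [Finset.mem_Icc]; omega)
        rw [show j - (j - a) = a by omega] at h
        exact h
    · apply Finset.sum_nbij' (fun k ↦ k - j) (fun q ↦ j + q)
      · intro a ha; simp only [Finset.mem_Ico, Finset.mem_Icc] at *; omega
      · intro a ha; simp only [Finset.mem_Ico, Finset.mem_Icc] at *; omega
      · intro a ha; simp only [Finset.mem_Ico] at ha; omega
      · intro a ha; simp only [Finset.mem_Icc] at ha; omega
      · intro a ha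
        simp only [Finset.mem_Ico] at ha
        have := hhigh (a - j) (by simp only [Finset.mem_Icc]; omega)
        rw [show j + (a - j) = a by omega] at this
        exact this
  rw [hsplit, hgj] at hmain
  rw [← hmain]; ring


theorem stmt_7 :
    ∀ j : ℕ, 1 ≤ j → tuenterCoeff j j = (Nat.factorial j : ℚ) := by
  intro j hj
  have hj0 : (j:ℚ) ≠ 0 := Nat.cast_ne_zero.mpr (by omega)
  have hfact : (((2*j-1).factorial : ℕ) : ℚ) ≠ 0 :=
    Nat.cast_ne_zero.mpr (Nat.factorial_ne_zero _)
  have hf : (((2*j).factorial : ℕ) : ℚ) = (2*(j:ℚ)) * (((2*j-1).factorial : ℕ) : ℚ) := by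
    rw [show 2*j = (2*j-1)+1 by omega, Nat.factorial_succ]
    have : (((2*j-1)+1 : ℕ) : ℚ) = 2*(j:ℚ) := by
      push_cast [show (1:ℕ) ≤ 2*j by omega]
      ring
    rw [Nat.cast_mul, this, Nat.add_sub_cancel]
  have hkey := tuenter_sum_key j hj
  have hS : ∑ q ∈ Icc 1 j, (-1:ℚ)^(q+j) * (((2*j).choose (j-q) : ℕ) : ℚ) * (q:ℚ)^(2*j)
      = (j:ℚ) * (((2*j-1).factorial : ℕ) : ℚ) := by
    rw [hf] at hkey
    linarith
  unfold tuenterCoeff catalanTriangle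
  have hsum : ∑ q ∈ Finset.Icc 1 j, (-1:ℚ)^(q+j)
        * ((q:ℚ)/(j:ℚ) * (((2*j).choose (j-q) : ℕ) : ℚ)) * (q:ℚ)^(2*j-1)
      = (1/(j:ℚ)) * ∑ q ∈ Finset.Icc 1 j,
        (-1:ℚ)^(q+j) * (((2*j).choose (j-q) : ℕ) : ℚ) * (q:ℚ)^(2*j) := by
    rw [Finset.mul_sum]
    apply Finset.sum_congr rfl
    intro q _
    have hpow : (q:ℚ)^(2*j) = (q:ℚ)^(2*j-1) * q := by
      rw [← pow_succ]
      congr 1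
      omega
    rw [hpow]
    field_simp
  rw [hsum, hS]
  field_simp
end

section
/- For all integers j ≥ 1 and k ≥ j, the rational number c(j,k) = (j!/(2j−1)!)·∑_{q=1}^{j} (−1)^{q+j} B(j,q) q^{2k−1}, where B(j,q) = (q/j)·C(2j, j−q), is an integer. -/
lemma factorial_dvd_altsum (n : ℕ) : ∀ m : ℕ,
    ((n.factorial : ℤ)) ∣ ∑ i ∈ Finset.range (n + 1), (-1 : ℤ) ^ i * (n.choose i) * (i : ℤ) ^ m := by
  induction n with
  | zero => intro m; exact one_dvd _
  | succ n ih =>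
    intro m
    match m with
    | 0 =>
      have h := Int.alternating_sum_range_choose (n := n + 1)
      simp only [Nat.succ_ne_zero, if_false] at h
      have heq : ∑ i ∈ Finset.range (n + 2), (-1 : ℤ) ^ i * ((n+1).choose i) * (i : ℤ) ^ 0
          = ∑ i ∈ Finset.range (n + 2), (-1 : ℤ) ^ i * ((n+1).choose i) := by
        refine Finset.sum_congr rfl fun i _ => by ring
      rw [heq, h]
      exact dvd_zero _
    | m + 1 =>
      have hstep : ∑ i ∈ Finset.range (n + 2), (-1 : ℤ) ^ i * ((n+1).choose i) * (i : ℤ) ^ (m+1)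
          = -((n : ℤ) + 1) * ∑ s ∈ Finset.range (m + 1), (m.choose s : ℤ) *
              ∑ t ∈ Finset.range (n + 1), (-1 : ℤ) ^ t * (n.choose t) * (t : ℤ) ^ s := by
        rw [Finset.sum_range_succ' _ (n+1)]
        have h1 : ∀ t, (-1 : ℤ) ^ (t+1) * ((n+1).choose (t+1)) * ((t:ℤ)+1) ^ (m+1)
            = -((n:ℤ)+1) * ((-1:ℤ)^t * (n.choose t) * ((t:ℤ)+1)^m) := by
          intro t
          have hc : ((n+1).choose (t+1) * ((t:ℤ)+1) : ℤ) = ((n:ℤ)+1) * (n.choose t) := by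
            exact_mod_cast congrArg (Nat.cast : ℕ → ℤ) (Nat.add_one_mul_choose_eq n t).symm
          linear_combination (-(-1:ℤ)^t * ((t:ℤ)+1)^m) * hc
        have h2 : ∑ t ∈ Finset.range (n+1), (-1 : ℤ) ^ (t+1) * ((n+1).choose (t+1)) * ((t:ℤ)+1) ^ (m+1)
            = -((n:ℤ)+1) * ∑ t ∈ Finset.range (n+1), (-1:ℤ)^t * (n.choose t) * ((t:ℤ)+1)^m := by
          rw [Finset.mul_sum]
          refine Finset.sum_congr rfl fun t _ => ?_
          exact h1 t
        push_cast
        rw [zero_pow (Nat.succ_ne_zero m), mul_zero, add_zero, h2]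
        congr 1
        -- expand (t+1)^m and swap sums
        have h3 : ∀ t ∈ Finset.range (n+1), (-1:ℤ)^t * (n.choose t) * ((t:ℤ)+1)^m
            = ∑ s ∈ Finset.range (m+1), (m.choose s : ℤ) * ((-1:ℤ)^t * (n.choose t) * (t:ℤ)^s) := by
          intro t _
          rw [add_pow, Finset.mul_sum]
          refine Finset.sum_congr rfl fun s _ => by ring
        rw [Finset.sum_congr rfl h3, Finset.sum_comm]
        refine Finset.sum_congr rfl fun s _ => by rw [Finset.mul_sum]
      rw [hstep]
      have : ((n+1).factorial : ℤ) = ((n:ℤ)+1) * (n.factorial : ℤ) := by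
        push_cast [Nat.factorial_succ]; ring
      rw [this]
      exact mul_dvd_mul (dvd_neg.mpr dvd_rfl) (Finset.dvd_sum fun s _ => (ih s).mul_left _)

theorem stmt_13 :
    ∀ j : ℕ, 1 ≤ j → ∀ k : ℕ, j ≤ k → ∃ m : ℤ, tuenterCoeff j k = (m : ℚ) := by
  intro j hj k hk
  have hk1 : 1 ≤ k := le_trans hj hk
  set f : ℕ → ℤ := fun i => (-1 : ℤ) ^ i * ((2*j).choose i) * ((j:ℤ) - i) ^ (2*k) with hf
  set S : ℤ := ∑ i ∈ Finset.range (2*j+1), f i with hS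
  set T : ℤ := ∑ q ∈ Finset.Icc 1 j, (-1:ℤ)^(q+j) * ((2*j).choose (j-q)) * (q:ℤ)^(2*k) with hT
  -- Step A : (2j)! ∣ S
  have hdvd : (((2*j).factorial : ℤ)) ∣ S := by
    have hexp : ∀ i ∈ Finset.range (2*j+1), f i
        = ∑ s ∈ Finset.range (2*k+1), ((-1:ℤ)^s * (j:ℤ)^(2*k-s) * ((2*k).choose s)) *
            ((-1:ℤ)^i * ((2*j).choose i) * (i:ℤ)^s) := by
      intro i _
      have : ((j:ℤ) - i) ^ (2*k) = (-(i:ℤ) + j) ^ (2*k) := by ring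
      rw [hf]
      simp only
      rw [this, add_pow, Finset.mul_sum]
      refine Finset.sum_congr rfl fun s _ => ?_
      rw [neg_pow]
      ring
    rw [hS, Finset.sum_congr rfl hexp, Finset.sum_comm]
    refine Finset.dvd_sum fun s _ => ?_
    rw [← Finset.mul_sum]
    exact (factorial_dvd_altsum (2*j) s).mul_left _
  obtain ⟨a, ha⟩ := hdvd
  -- Step B : S = 2 * T
  have hTf : T = ∑ i ∈ Finset.range j, f i := by
    rw [hT, ← Finset.Ico_add_one_right_eq_Icc, Finset.sum_Ico_eq_sum_range]
    conv_rhs => rw [← Finset.sum_range_reflect]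
    refine Finset.sum_congr rfl fun i hi => ?_
    rw [Finset.mem_range] at hi
    simp only [hf]
    have h1 : ((j - 1 - i : ℕ) : ℤ) = (j:ℤ) - 1 - i := by omega
    have h2 : j - (1 + i) = j - 1 - i := by omega
    have h3 : (1 + i) + j = (j - 1 - i) + (2*i + 2) := by omega
    have h4 : ((-1:ℤ)) ^ (2*i+2) = 1 := Even.neg_one_pow ⟨i+1, by ring⟩
    rw [h2, h3, pow_add, h4, h1]
    push_cast
    ring
  have hT2 : ∑ i ∈ Finset.range j, f (j + 1 + i) = T := by
    rw [hT, ← Finset.Ico_add_one_right_eq_Icc, Finset.sum_Ico_eq_sum_range]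
    refine Finset.sum_congr rfl fun i hi => ?_
    rw [Finset.mem_range] at hi
    simp only [hf]
    have hc : (2*j).choose (j+1+i) = (2*j).choose (j - (1+i)) := by
      rw [show j + 1 + i = 2*j - (j - (1+i)) from by omega]
      exact Nat.choose_symm (by omega)
    have h5 : (j:ℤ) - ((j+1+i : ℕ) : ℤ) = -(((1+i:ℕ)):ℤ) := by push_cast; ring
    rw [hc, h5, show (-(((1+i:ℕ)):ℤ))^(2*k) = (((1+i:ℕ)):ℤ)^(2*k) from Even.neg_pow ⟨k, by ring⟩ _,
      show j + 1 + i = (1+i) + j from by omega]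
  have hS2T : S = 2 * T := by
    rw [hS, show 2*j+1 = (j+1) + j from by ring, Finset.sum_range_add,
      Finset.sum_range_succ]
    have hfj : f j = 0 := by
      simp only [hf]
      rw [sub_self, zero_pow (by omega), mul_zero]
    rw [hfj, add_zero, ← hTf]
    have : ∑ i ∈ Finset.range j, f (j + 1 + i) = T := hT2
    omega
  -- Step C
  refine ⟨(j.factorial : ℤ) * a, ?_⟩
  have hj0 : (j : ℚ) ≠ 0 := Nat.cast_ne_zero.mpr (by omega)
  have hfac0 : ((2*j - 1).factorial : ℚ) ≠ 0 := Nat.cast_ne_zero.mpr (Nat.factorial_ne_zero _)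
  have hfacts : ((2*j).factorial : ℚ) = (2*j : ℚ) * ((2*j - 1).factorial : ℚ) := by
    rw [← Nat.mul_factorial_pred (by omega : 2*j ≠ 0)]
    push_cast
    ring
  have h2T : (2 : ℚ) * (T : ℚ) = ((2*j).factorial : ℚ) * (a : ℚ) := by
    exact_mod_cast congrArg (Int.cast : ℤ → ℚ) (hS2T ▸ ha)
  have hsum : ∑ q ∈ Finset.Icc 1 j, (-1 : ℚ) ^ (q + j) * catalanTriangle j q * (q : ℚ) ^ (2*k - 1)
      = (T : ℚ) / j := by
    rw [eq_div_iff hj0, hT]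
    push_cast
    rw [Finset.sum_mul]
    refine Finset.sum_congr rfl fun q hq => ?_
    rw [Finset.mem_Icc] at hq
    unfold catalanTriangle
    rw [show 2*k = (2*k - 1) + 1 from by omega, pow_succ]
    field_simp
    ring
    rw [Nat.add_sub_cancel_left]
  unfold tuenterCoeff
  rw [hsum]
  push_cast
  rw [div_mul_div_comm, div_eq_iff (by positivity)]
  have hT' : (T : ℚ) = ((2*j).factorial : ℚ) * (a : ℚ) / 2 := by
    rw [← h2T]; ring
  rw [hT', hfacts]
  field_simp
end

section
/- For every integer j ≥ 1, F_2(j) = (1/360)·j(j+1)(j+2)(2j+1)(2j+3)(5j−1), where F_2(j) = 1 + ∑_{2≤λ_1≤j} λ_1² + ∑_{2≤λ_1≤λ_2≤j} λ_1²λ_2². -/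
/-- `F k j = ∑_{i=0}^{k} ∑_{2 ≤ λ₁ ≤ ⋯ ≤ λᵢ ≤ j} λ₁² ⋯ λᵢ²`, where the inner sum runs over
weakly increasing `i`-tuples with entries in `[2, j]`, encoded as multisets of size `i`
with elements in `Finset.Icc 2 j`; the `i = 0` term is `1`. -/
def F (k j : ℕ) : ℕ :=
  ∑ i ∈ Finset.range (k + 1),
    ∑ m ∈ (Finset.Icc 2 j).sym i, ((m : Multiset ℕ).map (fun x => x ^ 2)).prod

lemma pair_eq_pair_nat {a b c d : ℕ} (hab : a ≤ b) (hcd : c ≤ d)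
    (h : ({a, b} : Multiset ℕ) = {c, d}) : a = c ∧ b = d := by
  have hsum : a + b = c + d := by
    have := congrArg Multiset.sum h
    simpa using this
  have hsup : a ⊔ b = c ⊔ d := by
    have := congrArg Multiset.sup h
    simpa using this
  rw [sup_eq_right.mpr hab, sup_eq_right.mpr hcd] at hsup
  omega

lemma sum_sym_one (s : Finset ℕ) (f : ℕ → ℕ) :
    ∑ m ∈ s.sym 1, ((m : Multiset ℕ).map f).prod = ∑ a ∈ s, f a := by
  refine (Finset.sum_bij (fun a _ => a ::ₛ Sym.nil) ?_ ?_ ?_ ?_).symm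
  · intro a ha
    rw [Finset.mem_sym_iff]
    intro b hb
    rcases Sym.mem_cons.mp hb with h | h
    · exact h ▸ ha
    · simp at h
  · intro a _ b _ h
    have := congrArg (fun m : Sym ℕ 1 => (m : Multiset ℕ)) h
    simpa [Sym.coe_cons] using this
  · intro m hm
    have hc : Multiset.card (m : Multiset ℕ) = 1 := m.2
    obtain ⟨a, ha⟩ := Multiset.card_eq_one.mp hc
    refine ⟨a, ?_, ?_⟩
    · exact Finset.mem_sym_iff.mp hm a (by rw [← Sym.mem_coe, ha]; simp)
    · apply Sym.coe_injective
      simp only [Sym.coe_cons, Sym.coe_nil]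
      exact ha.symm
  · intro a _
    simp [Sym.coe_cons]

lemma sum_sym_two (s : Finset ℕ) :
    ∑ m ∈ s.sym 2, ((m : Multiset ℕ).map (fun x => x ^ 2)).prod
      = ∑ p ∈ (s ×ˢ s).filter (fun p => p.1 ≤ p.2), p.1 ^ 2 * p.2 ^ 2 := by
  refine (Finset.sum_bij (fun p _ => p.1 ::ₛ p.2 ::ₛ Sym.nil) ?_ ?_ ?_ ?_).symm
  · intro p hp
    simp only [Finset.mem_filter, Finset.mem_product] at hp
    rw [Finset.mem_sym_iff]
    intro b hb
    rcases Sym.mem_cons.mp hb with h | h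
    · exact h ▸ hp.1.1
    · rcases Sym.mem_cons.mp h with h' | h'
      · exact h' ▸ hp.1.2
      · simp at h'
  · intro p hp q hq h
    simp only [Finset.mem_filter, Finset.mem_product] at hp hq
    have := congrArg (fun m : Sym ℕ 2 => (m : Multiset ℕ)) h
    simp only [Sym.coe_cons, Sym.coe_nil] at this
    have h2 : ({p.1, p.2} : Multiset ℕ) = {q.1, q.2} := by simpa using this
    obtain ⟨h3, h4⟩ := pair_eq_pair_nat hp.2 hq.2 h2
    exact Prod.ext h3 h4
  · intro m hm
    have hc : Multiset.card (m : Multiset ℕ) = 2 := m.2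
    obtain ⟨a, b, hab⟩ := Multiset.card_eq_two.mp hc
    have h := Finset.mem_sym_iff.mp hm
    have ha : a ∈ s := h a (by rw [← Sym.mem_coe, hab]; simp)
    have hb : b ∈ s := h b (by rw [← Sym.mem_coe, hab]; simp)
    refine ⟨(min a b, max a b), ?_, ?_⟩
    · simp only [Finset.mem_filter, Finset.mem_product]
      refine ⟨⟨?_, ?_⟩, min_le_max⟩
      · rcases min_choice a b with h' | h' <;> rw [h'] <;> assumption
      · rcases max_choice a b with h' | h' <;> rw [h'] <;> assumption
    · apply Sym.coe_injective
      rcases le_total a b with h' | h'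
      · simp only [Sym.coe_cons, Sym.coe_nil, min_eq_left h', max_eq_right h', hab]
        rfl
      · simp only [Sym.coe_cons, Sym.coe_nil, min_eq_right h', max_eq_left h', hab]
        rw [Multiset.cons_swap]
        rfl
  · intro p _
    simp [Sym.coe_cons]

lemma filter_pairs (j : ℕ) :
    ∑ p ∈ ((Finset.Icc 2 j) ×ˢ (Finset.Icc 2 j)).filter (fun p => p.1 ≤ p.2),
        p.1 ^ 2 * p.2 ^ 2
      = ∑ b ∈ Finset.Icc 2 j, ∑ a ∈ Finset.Icc 2 b, a ^ 2 * b ^ 2 := by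
  rw [Finset.sum_filter, Finset.sum_product_right]
  refine Finset.sum_congr rfl fun b hb => ?_
  rw [Finset.mem_Icc] at hb
  rw [← Finset.sum_filter]
  apply Finset.sum_congr _ fun a _ => rfl
  ext a
  simp only [Finset.mem_filter, Finset.mem_Icc]
  omega

lemma sq_sum (j : ℕ) (hj : 1 ≤ j) :
    (∑ a ∈ Finset.Icc 2 j, ((a : ℚ))^2)
      = (j : ℚ) * ((j : ℚ) + 1) * (2 * (j : ℚ) + 1) / 6 - 1 := by
  induction j, hj using Nat.le_induction with
  | base => norm_num
  | succ n hn ih =>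
    rw [Finset.sum_Icc_succ_top (by omega), ih]
    push_cast
    ring

lemma main_sum (j : ℕ) (hj : 1 ≤ j) :
    1 + (∑ a ∈ Finset.Icc 2 j, ((a : ℚ))^2)
      + ∑ b ∈ Finset.Icc 2 j,
          ((b : ℚ))^2 * ((b : ℚ) * ((b : ℚ) + 1) * (2 * (b : ℚ) + 1) / 6 - 1)
      = (1 / 360) * (j : ℚ) * ((j : ℚ) + 1) * ((j : ℚ) + 2) *
        (2 * (j : ℚ) + 1) * (2 * (j : ℚ) + 3) * (5 * (j : ℚ) - 1) := by
  induction j, hj using Nat.le_induction with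
  | base => norm_num
  | succ n hn ih =>
    rw [Finset.sum_Icc_succ_top (by omega : 2 ≤ n + 1),
        Finset.sum_Icc_succ_top (by omega : 2 ≤ n + 1)]
    push_cast
    push_cast at ih
    linear_combination ih

theorem stmt_17 :
    ∀ j : ℕ, 1 ≤ j →
      (F 2 j : ℚ) = (1 / 360) * (j : ℚ) * ((j : ℚ) + 1) * ((j : ℚ) + 2) *
        (2 * (j : ℚ) + 1) * (2 * (j : ℚ) + 3) * (5 * (j : ℚ) - 1) := by
  intro j hj
  have hF : F 2 j = 1 + (∑ a ∈ Finset.Icc 2 j, a ^ 2)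
      + ∑ b ∈ Finset.Icc 2 j, ∑ a ∈ Finset.Icc 2 b, a ^ 2 * b ^ 2 := by
    unfold F
    rw [Finset.sum_range_succ, Finset.sum_range_succ, Finset.sum_range_one]
    rw [sum_sym_one, sum_sym_two, filter_pairs]
    norm_num [Sym.coe_nil]
    rfl
  rw [hF]
  push_cast
  have key : ∀ b ∈ Finset.Icc 2 j, (∑ a ∈ Finset.Icc 2 b, ((a:ℚ))^2 * ((b:ℚ))^2)
      = ((b:ℚ))^2 * ((b : ℚ) * ((b : ℚ) + 1) * (2 * (b : ℚ) + 1) / 6 - 1) := by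
    intro b hb
    rw [Finset.mem_Icc] at hb
    rw [← Finset.sum_mul, sq_sum b (by omega)]
    ring
  rw [Finset.sum_congr rfl key]
  exact main_sum j hj
end

section
/- For every integer j ≥ 1, F_3(j) = (1/45360)·j(j+1)(j+2)(j+3)(2j+1)(2j+3)(2j+5)(35j²−21j+4), where F_3(j) = 1 + ∑_{2≤λ_1≤j} λ_1² + ∑_{2≤λ_1≤λ_2≤j} λ_1²λ_2² + ∑_{2≤λ_1≤λ_2≤λ_3≤j} λ_1²λ_2²λ_3². -/
def g (i j : ℕ) : ℕ := ∑ m ∈ (Finset.Icc 2 j).sym i, ((m : Multiset ℕ).map (fun x => x ^ 2)).prod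

lemma g_zero (j : ℕ) : g 0 j = 1 := rfl

lemma filter_mem_sym (s : Finset ℕ) (a : ℕ) (ha : a ∈ s) (n : ℕ) :
    (s.sym (n+1)).filter (fun m => a ∈ m) = (s.sym n).image (Sym.cons a) := by
  ext m
  simp only [Finset.mem_filter, Finset.mem_image, Finset.mem_sym_iff]
  constructor
  · rintro ⟨hm, ham⟩
    refine ⟨m.erase a ham, fun b hb => hm b ?_, Sym.cons_erase ham⟩
    have : b ∈ ((m.erase a ham : Sym ℕ n) : Multiset ℕ) := hb
    rw [Sym.coe_erase] at this
    exact Multiset.mem_of_mem_erase this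
  · rintro ⟨m', hm', rfl⟩
    refine ⟨fun b hb => ?_, Sym.mem_cons_self a m'⟩
    rcases Sym.mem_cons.mp hb with rfl | h
    exacts [ha, hm' b h]

lemma cons_inj (a : ℕ) {n : ℕ} : Function.Injective (Sym.cons a : Sym ℕ n → Sym ℕ (n+1)) := by
  intro x y h
  have := congrArg (fun z : Sym ℕ (n+1) => (z : Multiset ℕ)) h
  simp only [Sym.coe_cons] at this
  exact Sym.coe_injective ((Multiset.cons_inj_right a).mp this)

lemma g_rec (i j : ℕ) (hj : 1 ≤ j) :
    g (i+1) (j+1) = g (i+1) j + (j+1)^2 * g i (j+1) := by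
  have ha : j + 1 ∈ Finset.Icc 2 (j+1) := by simp [Finset.mem_Icc]; omega
  unfold g
  rw [← Finset.sum_filter_add_sum_filter_not ((Finset.Icc 2 (j+1)).sym (i+1))
        (fun m => (j+1) ∈ m)]
  have h1 : Finset.filter (fun m => ¬ (j+1) ∈ m) ((Finset.Icc 2 (j+1)).sym (i+1))
      = (Finset.Icc 2 j).sym (i+1) := by
    ext m
    simp only [Finset.mem_filter, Finset.mem_sym_iff, Finset.mem_Icc]
    constructor
    · rintro ⟨hm, hnm⟩
      intro b hb
      have h1 := hm b hb
      have h2 : b ≠ j + 1 := fun h => hnm (h ▸ hb)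
      omega
    · intro hm
      constructor
      · intro b hb; have := hm b hb; omega
      · intro hmem; have := hm _ hmem; omega
  rw [h1, filter_mem_sym _ _ ha, Finset.sum_image (fun x _ y _ h => cons_inj _ h)]
  rw [add_comm, Finset.mul_sum]
  congr 1
  apply Finset.sum_congr rfl
  intro m _
  rw [Sym.coe_cons, Multiset.map_cons, Multiset.prod_cons]

lemma F_zero (j : ℕ) : F 0 j = 1 := by
  show ∑ i ∈ Finset.range 1, g i j = 1
  simp [g_zero]

lemma F_rec (k j : ℕ) (hj : 1 ≤ j) :
    F (k+1) (j+1) = F (k+1) j + (j+1)^2 * F k (j+1) := by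
  show (∑ i ∈ Finset.range (k+2), g i (j+1))
      = (∑ i ∈ Finset.range (k+2), g i j) + (j+1)^2 * ∑ i ∈ Finset.range (k+1), g i (j+1)
  rw [Finset.sum_range_succ' (fun i => g i (j+1)) (k+1),
      Finset.sum_range_succ' (fun i => g i j) (k+1)]
  simp only [g_zero]
  have : ∀ i ∈ Finset.range (k+1), g (i+1) (j+1) = g (i+1) j + (j+1)^2 * g i (j+1) :=
    fun i _ => g_rec i j hj
  rw [Finset.sum_congr rfl this, Finset.sum_add_distrib, ← Finset.mul_sum]
  ring

lemma F_one_1 : F 1 1 = 1 := by decide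
lemma F_two_1 : F 2 1 = 1 := by decide
lemma F_three_1 : F 3 1 = 1 := by decide

lemma main_ind : ∀ j : ℕ, 1 ≤ j →
    (F 1 j : ℚ) = (j:ℚ)*((j:ℚ)+1)*(2*(j:ℚ)+1)/6 ∧
    (F 2 j : ℚ) = (j:ℚ)*((j:ℚ)+1)*((j:ℚ)+2)*(2*(j:ℚ)+1)*(2*(j:ℚ)+3)*(5*(j:ℚ)-1)/360 ∧
    (F 3 j : ℚ) = (1 / 45360) * (j : ℚ) * ((j : ℚ) + 1) * ((j : ℚ) + 2) * ((j : ℚ) + 3) *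
        (2 * (j : ℚ) + 1) * (2 * (j : ℚ) + 3) * (2 * (j : ℚ) + 5) *
        (35 * (j : ℚ) ^ 2 - 21 * (j : ℚ) + 4) := by
  intro j hj
  induction j, hj using Nat.le_induction with
  | base =>
    refine ⟨?_, ?_, ?_⟩
    · rw [F_one_1]; norm_num
    · rw [F_two_1]; norm_num
    · rw [F_three_1]; norm_num
  | succ j hj ih =>
    obtain ⟨h1, h2, h3⟩ := ih
    have r1 := F_rec 0 j hj
    have r2 := F_rec 1 j hj
    have r3 := F_rec 2 j hj
    have e1 : (F 1 (j+1) : ℚ) =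
        ((j:ℚ)+1)*(((j:ℚ)+1)+1)*(2*((j:ℚ)+1)+1)/6 := by
      rw [r1, F_zero]; push_cast; rw [h1]; ring
    have e2 : (F 2 (j+1) : ℚ) =
        ((j:ℚ)+1)*(((j:ℚ)+1)+1)*(((j:ℚ)+1)+2)*(2*((j:ℚ)+1)+1)*(2*((j:ℚ)+1)+3)*(5*((j:ℚ)+1)-1)/360 := by
      rw [r2]; push_cast [-Nat.cast_ofNat] at e1 ⊢; rw [h2, e1]; ring
    have e3 : (F 3 (j+1) : ℚ) =
        (1 / 45360) * ((j:ℚ)+1) * (((j:ℚ)+1) + 1) * (((j:ℚ)+1) + 2) * (((j:ℚ)+1) + 3) *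
        (2 * ((j:ℚ)+1) + 1) * (2 * ((j:ℚ)+1) + 3) * (2 * ((j:ℚ)+1) + 5) *
        (35 * ((j:ℚ)+1) ^ 2 - 21 * ((j:ℚ)+1) + 4) := by
      rw [r3]; push_cast [-Nat.cast_ofNat] at e2 ⊢; rw [h3, e2]; ring
    push_cast at e1 e2 e3 ⊢
    exact ⟨by rw [e1], by rw [e2], by rw [e3]⟩

theorem stmt_18 :
    ∀ j : ℕ, 1 ≤ j →
      (F 3 j : ℚ) = (1 / 45360) * (j : ℚ) * ((j : ℚ) + 1) * ((j : ℚ) + 2) * ((j : ℚ) + 3) *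
        (2 * (j : ℚ) + 1) * (2 * (j : ℚ) + 3) * (2 * (j : ℚ) + 5) *
        (35 * (j : ℚ) ^ 2 - 21 * (j : ℚ) + 4) := by
  intro j hj
  exact (main_ind j hj).2.2
end
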